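/- The atoms of the elementary Puiseux monoid M = ⟨1/p : p prime⟩ are exactly the elements 1/p with p prime; in particular M is atomic. -/

import Mathlib

open scoped BigOperators

/-- A Puiseux monoid: an additive submonoid of ℚ consisting of nonnegative elements. -/
def IsPuiseux (M : AddSubmonoid ℚ) : Prop := ∀ x ∈ M, (0:ℚ) ≤ x

/-- `a` is an atom of the submonoid `S`. -/
def IsAtomOf {α : Type*} [AddCommMonoid α] (S : AddSubmonoid α) (a : α) : Prop :=
  a ∈ S ∧ a ≠ 0 ∧ ∀ u v : α, u ∈ S → v ∈ S → a = u + v → u = 0 ∨ v = 0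

/-- `x` has a factorization of length `n` into atoms of `S`. -/
def IsLengthOf {α : Type*} [AddCommMonoid α] (S : AddSubmonoid α) (x : α) (n : ℕ) : Prop :=
  ∃ f : Fin n → α, (∀ i, IsAtomOf S (f i)) ∧ x = ∑ i, f i

/-- The set of lengths of `x` in `S`. -/
def lengthsOf {α : Type*} [AddCommMonoid α] (S : AddSubmonoid α) (x : α) : Set ℕ :=
  {n | IsLengthOf S x n}

/-- `S` is atomic: every nonzero element is a finite sum of atoms. -/
def AtomicM {α : Type*} [AddCommMonoid α] (S : AddSubmonoid α) : Prop :=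
  ∀ x ∈ S, x ≠ 0 → ∃ n : ℕ, IsLengthOf S x n

/-- The system of sets of lengths of `M`. -/
def systemOfLengths (M : AddSubmonoid ℚ) : Set (Set ℕ) :=
  {S | ∃ x ∈ M, lengthsOf M x = S}

/-- The elementary Puiseux monoid ⟨1/p : p prime⟩. -/
def elemPM : AddSubmonoid ℚ :=
  AddSubmonoid.closure {q : ℚ | ∃ p : ℕ, p.Prime ∧ q = 1 / p}


section Aux

lemma gen_pos {y : ℚ} (hy : ∃ p : ℕ, p.Prime ∧ y = 1 / p) : 0 < y := by
  obtain ⟨p, hp, rfl⟩ := hy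
  exact div_pos one_pos (by exact_mod_cast hp.pos)

lemma gen_den {p : ℕ} (hp : p.Prime) : ((1 : ℚ) / p).den = p := by
  rw [one_div]
  exact Rat.inv_natCast_den_of_pos hp.pos

lemma sum_den_not_dvd {p : ℕ} (hp : p.Prime) (m : Multiset ℚ)
    (hm : ∀ y ∈ m, ¬ (p ∣ y.den)) : ¬ (p ∣ m.sum.den) := by
  induction m using Multiset.induction with
  | empty => simpa using hp.one_lt.ne'
  | cons a s ih =>
    intro hdvd
    have h1 : (a + s.sum).den ∣ a.den * s.sum.den := Rat.add_den_dvd a s.sum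
    rw [Multiset.sum_cons] at hdvd
    have := hp.dvd_mul.mp (hdvd.trans h1)
    rcases this with h | h
    · exact hm a (Multiset.mem_cons_self a s) h
    · exact ih (fun y hy => hm y (Multiset.mem_cons_of_mem hy)) h

lemma key {p : ℕ} (hp : p.Prime) (m : Multiset ℚ)
    (hm : ∀ y ∈ m, ∃ q : ℕ, q.Prime ∧ y = 1 / q) (hs : m.sum = 1 / p) :
    m = {(1 / p : ℚ)} := by
  classical
  set k := m.count (1 / (p : ℚ)) with hk
  have hsplit : m.filter (· = (1/(p:ℚ))) + m.filter (¬ · = (1/(p:ℚ))) = m :=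
    Multiset.filter_add_not _ m
  set m₂ := m.filter (¬ · = (1/(p:ℚ))) with hm₂
  have hfe : m.filter (· = (1/(p:ℚ))) = Multiset.replicate k (1/(p:ℚ)) :=
    Multiset.filter_eq' m (1/(p:ℚ))
  have hm₂mem : ∀ y ∈ m₂, (∃ q : ℕ, q.Prime ∧ y = 1 / q) ∧ y ≠ 1/(p:ℚ) := by
    intro y hy
    rw [hm₂, Multiset.mem_filter] at hy
    exact ⟨hm y hy.1, by simpa using hy.2⟩
  have hden : ¬ (p ∣ m₂.sum.den) := by
    apply sum_den_not_dvd hp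
    intro y hy
    obtain ⟨⟨q, hq, rfl⟩, hne⟩ := hm₂mem y hy
    rw [gen_den hq]
    intro hdvd
    exact hne (by rw [(Nat.prime_dvd_prime_iff_eq hp hq).mp hdvd])
  have hsum : (k : ℚ) * (1/p) + m₂.sum = 1 / p := by
    calc (k : ℚ) * (1/p) + m₂.sum
        = (Multiset.replicate k (1/(p:ℚ))).sum + m₂.sum := by
          rw [Multiset.sum_replicate, nsmul_eq_mul]
      _ = (m.filter (· = (1/(p:ℚ))) + m₂).sum := by rw [hfe, Multiset.sum_add]
      _ = 1 / p := by rw [hsplit, hs]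
  have hppos : (0:ℚ) < p := by exact_mod_cast hp.pos
  have hs2nonneg : 0 ≤ m₂.sum :=
    Multiset.sum_nonneg (fun y hy => (gen_pos (hm₂mem y hy).1).le)
  have hk1 : k = 1 := by
    rcases Nat.lt_or_ge k 1 with h | h
    · interval_cases k
      simp only [Nat.cast_zero, zero_mul, zero_add] at hsum
      exact absurd (hsum ▸ hden) (by rw [gen_den hp]; simp)
    rcases Nat.lt_or_ge k 2 with h2 | h2
    · omega
    · exfalso
      have : (2:ℚ) ≤ k := by exact_mod_cast h2
      nlinarith [one_div_pos.mpr hppos]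
  have hs2zero : m₂.sum = 0 := by
    rw [hk1] at hsum; push_cast at hsum; linarith
  have hm₂empty : m₂ = 0 := by
    by_contra h
    obtain ⟨y, hy⟩ := Multiset.exists_mem_of_ne_zero h
    have hle : y ≤ m₂.sum :=
      Multiset.single_le_sum (fun x hx => (gen_pos (hm₂mem x hx).1).le) y hy
    have := gen_pos (hm₂mem y hy).1
    rw [hs2zero] at hle; linarith
  rw [← hsplit, hfe, hk1, hm₂empty]
  simp

end Aux

lemma atom_aux {p : ℕ} (hp : p.Prime) :
    ∀ u v : ℚ, u ∈ elemPM → v ∈ elemPM → 1 / (p:ℚ) = u + v → u = 0 ∨ v = 0 := by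
  intro u v hu hv huv
  obtain ⟨mu, hug, hus⟩ := (AddSubmonoid.exists_multiset_of_mem_closure hu :
    ∃ m : Multiset ℚ, (∀ y ∈ m, ∃ q : ℕ, q.Prime ∧ y = 1 / q) ∧ m.sum = u)
  obtain ⟨mv, hvg, hvs⟩ := (AddSubmonoid.exists_multiset_of_mem_closure hv :
    ∃ m : Multiset ℚ, (∀ y ∈ m, ∃ q : ℕ, q.Prime ∧ y = 1 / q) ∧ m.sum = v)
  have hkey : mu + mv = {(1/(p:ℚ))} := by
    apply key hp
    · intro y hy
      rcases Multiset.mem_add.mp hy with h | h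
      exacts [hug y h, hvg y h]
    · rw [Multiset.sum_add, hus, hvs, ← huv]
  have hcard : Multiset.card mu + Multiset.card mv = 1 := by
    have := congrArg Multiset.card hkey
    simpa using this
  rcases Nat.add_eq_one_iff.mp hcard with ⟨h, _⟩ | ⟨_, h⟩
  · left; rw [← hus, Multiset.card_eq_zero.mp h, Multiset.sum_zero]
  · right; rw [← hvs, Multiset.card_eq_zero.mp h, Multiset.sum_zero]

/-- The atoms of the elementary Puiseux monoid are exactly the reciprocals of
primes; in particular the monoid is atomic. -/
theorem stmt17 :
    (∀ a : ℚ, IsAtomOf elemPM a ↔ ∃ p : ℕ, p.Prime ∧ a = 1 / p) ∧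
      AtomicM elemPM := by
  constructor
  · intro a
    constructor
    · rintro ⟨haM, ha0, hatom⟩
      obtain ⟨m, hmg, hms⟩ := (AddSubmonoid.exists_multiset_of_mem_closure haM :
        ∃ m : Multiset ℚ, (∀ y ∈ m, ∃ q : ℕ, q.Prime ∧ y = 1 / q) ∧ m.sum = a)
      have hm0 : m ≠ 0 := by rintro rfl; simp at hms; exact ha0 hms.symm
      obtain ⟨y, hy⟩ := Multiset.exists_mem_of_ne_zero hm0
      obtain ⟨t, rfl⟩ := Multiset.exists_cons_of_mem hy
      have hyM : y ∈ elemPM := AddSubmonoid.subset_closure (hmg y hy)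
      have htM : t.sum ∈ elemPM := AddSubmonoid.multiset_sum_mem _ t
        (fun x hx => AddSubmonoid.subset_closure (hmg x (Multiset.mem_cons_of_mem hx)))
      have heq : a = y + t.sum := by rw [← hms, Multiset.sum_cons]
      rcases hatom y t.sum hyM htM heq with h | h
      · exact absurd h (gen_pos (hmg y hy)).ne'
      · rw [heq, h, add_zero]; exact hmg y hy
    · rintro ⟨p, hp, rfl⟩
      exact ⟨AddSubmonoid.subset_closure ⟨p, hp, rfl⟩, (gen_pos ⟨p, hp, rfl⟩).ne', atom_aux hp⟩
  · -- atomicity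
    intro x hx hx0
    obtain ⟨m, hmg, hms⟩ := (AddSubmonoid.exists_multiset_of_mem_closure hx :
      ∃ m : Multiset ℚ, (∀ y ∈ m, ∃ q : ℕ, q.Prime ∧ y = 1 / q) ∧ m.sum = x)
    refine ⟨m.toList.length, fun i => m.toList.get i, ?_, ?_⟩
    · intro i
      have hmem : m.toList.get i ∈ m := by
        rw [← Multiset.mem_toList]; exact List.get_mem _ _
      obtain ⟨q, hq, hqe⟩ := hmg _ hmem
      have hqM : (1/(q:ℚ)) ∈ elemPM := AddSubmonoid.subset_closure ⟨q, hq, rfl⟩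
      show IsAtomOf elemPM (m.toList.get i)
      rw [hqe]
      refine ⟨hqM, (gen_pos ⟨q, hq, rfl⟩).ne', ?_⟩
      exact atom_aux hq
    · rw [← hms, ← Multiset.sum_toList]
      simp [List.get_eq_getElem, Fin.sum_univ_getElem]
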